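/- arXiv:1409.7744 — 4 statements merged into one kernel-verified Lean document; each statement's English description precedes it below -/
import Mathlib

section
/- Let v_1, ..., v_n be a basis of R^n and set t_{0,j} = v_j for 1 ≤ j ≤ n and t_{i,j} = v_j - v_i for 1 ≤ i < j ≤ n. Then the n(n+1)/2 symmetric rank-one matrices T_{i,j} = t_{i,j} t_{i,j}^T, 0 ≤ i < j ≤ n, are linearly independent and hence form a basis of the space of symmetric n×n real matrices. -/
open Matrix

/-- The submodule of symmetric n×n real matrices. -/
def symmetricMatrices (n : ℕ) : Submodule ℝ (Matrix (Fin n) (Fin n) ℝ) where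
  carrier := {A | A.IsSymm}
  add_mem' := fun ha hb => ha.add hb
  zero_mem' := Matrix.isSymm_zero
  smul_mem' := fun c _ ha => ha.smul c

/-- Given a basis v_1, ..., v_n of ℝ^n, with x_0 = 0 and x_j = v_j, the rank-one
matrices T_{i,j} = t_{i,j} t_{i,j}ᵀ with t_{i,j} = x_j - x_i, 0 ≤ i < j ≤ n, are
linearly independent and form a basis of the space of symmetric matrices. -/
theorem rank_one_tensors_basis (n : ℕ) (v : Fin n → (Fin n → ℝ))
    (hv : LinearIndependent ℝ v)
    (x : Fin (n + 1) → (Fin n → ℝ))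
    (hx0 : x 0 = 0) (hxs : ∀ j : Fin n, x j.succ = v j)
    (T : {p : Fin (n + 1) × Fin (n + 1) // p.1 < p.2} → Matrix (Fin n) (Fin n) ℝ)
    (hT : ∀ p, T p = Matrix.vecMulVec (x p.1.2 - x p.1.1) (x p.1.2 - x p.1.1)) :
    LinearIndependent ℝ T ∧
      Submodule.span ℝ (Set.range T) = symmetricMatrices n := by
  classical
  -- the basis
  let b : Module.Basis (Fin n) ℝ (Fin n → ℝ) :=
    Module.Basis.mk hv (hv.span_eq_top_of_card_eq_finrank' (by simp)).ge
  have hb : ∀ k, b k = v k := fun k => Module.Basis.mk_apply _ _ k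
  -- coordinates of the x's
  have hd : ∀ (m : Fin (n + 1)) (a : Fin n),
      b.repr (x m) a = if m = a.succ then 1 else 0 := by
    intro m a
    induction m using Fin.cases with
    | zero => simp [hx0, (Fin.succ_ne_zero a).symm]
    | succ j =>
      rw [hxs j, ← hb j]
      simp [Module.Basis.repr_self, Finsupp.single_apply, Fin.succ_inj, eq_comm]
  have hr : ∀ (m m' : Fin (n + 1)) (a : Fin n),
      b.repr (x m - x m') a
        = (if m = a.succ then (1:ℝ) else 0) - (if m' = a.succ then 1 else 0) := by
    intro m m' a
    rw [map_sub]
    simp [hd]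
  -- the evaluation linear functionals
  have key : ∀ (c : {p : Fin (n + 1) × Fin (n + 1) // p.1 < p.2} → ℝ),
      (∑ p, c p • T p) = 0 → ∀ a a' : Fin n,
      ∑ p, c p * (b.repr (x p.1.2 - x p.1.1) a) * (b.repr (x p.1.2 - x p.1.1) a') = 0 := by
    intro c hc a a'
    let Φ : Matrix (Fin n) (Fin n) ℝ →ₗ[ℝ] ℝ :=
      { toFun := fun A => b.repr (fun i => b.repr (A i) a') a
        map_add' := by
          intro A B
          show b.repr (fun i => b.repr ((A + B) i) a') a
              = b.repr (fun i => b.repr (A i) a') a + b.repr (fun i => b.repr (B i) a') a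
          have h1 : (fun i => b.repr ((A + B) i) a')
              = (fun i => b.repr (A i) a') + fun i => b.repr (B i) a' := by
            funext i
            show b.repr (A i + B i) a' = _
            simp
          rw [h1, map_add]; simp
        map_smul' := by
          intro r A
          show b.repr (fun i => b.repr ((r • A) i) a') a
              = r * b.repr (fun i => b.repr (A i) a') a
          have h1 : (fun i => b.repr ((r • A) i) a')
              = r • fun i => b.repr (A i) a' := by
            funext i
            show b.repr (r • A i) a' = _
            rw [_root_.map_smul]
            simp
          rw [h1, _root_.map_smul]
          simp }
    have hΦT : ∀ p, Φ (T p)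
        = (b.repr (x p.1.2 - x p.1.1) a) * (b.repr (x p.1.2 - x p.1.1) a') := by
      intro p
      rw [hT p]
      show b.repr (fun i => b.repr (vecMulVec _ _ i) a') a = _
      have h1 : (fun i => b.repr (vecMulVec (x p.1.2 - x p.1.1) (x p.1.2 - x p.1.1) i) a')
          = (b.repr (x p.1.2 - x p.1.1) a') • (x p.1.2 - x p.1.1) := by
        funext i
        have h2 : vecMulVec (x p.1.2 - x p.1.1) (x p.1.2 - x p.1.1) i
            = (x p.1.2 - x p.1.1) i • (x p.1.2 - x p.1.1) := by
          funext j; simp [vecMulVec_apply, smul_eq_mul]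
        rw [h2, _root_.map_smul]
        simp [mul_comm]
      rw [h1, _root_.map_smul]
      simp [mul_comm]
    have h0 : Φ (∑ p, c p • T p) = 0 := by rw [hc]; simp
    rw [map_sum] at h0
    simp only [_root_.map_smul, smul_eq_mul, hΦT] at h0
    rw [← h0]
    congr 1; funext p; ring
  -- linear independence
  have hli : LinearIndependent ℝ T := by
    rw [Fintype.linearIndependent_iff]
    intro c hc
    have hk := key c hc
    -- first: coefficients with first index ≠ 0 vanish
    have hoff : ∀ q : {p : Fin (n + 1) × Fin (n + 1) // p.1 < p.2},
        q.val.1 ≠ 0 → c q = 0 := by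
      intro q hq0
      obtain ⟨a, ha⟩ := Fin.eq_succ_of_ne_zero hq0
      have hq2 : q.val.2 ≠ 0 := by
        intro h
        have h2 := q.prop
        rw [h] at h2
        exact absurd h2 (by simp)
      obtain ⟨a', ha'⟩ := Fin.eq_succ_of_ne_zero hq2
      have hsum := hk a a'
      have heach : ∀ p : {p : Fin (n + 1) × Fin (n + 1) // p.1 < p.2},
          c p * (b.repr (x p.1.2 - x p.1.1) a) * (b.repr (x p.1.2 - x p.1.1) a')
            = if p = q then -c q else 0 := by
        intro p
        rw [hr, hr, ← ha, ← ha']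
        by_cases hpq : p = q
        · subst hpq
          simp [Ne.symm (ne_of_lt p.prop), ne_of_lt p.prop]
        · rw [if_neg hpq]
          by_cases h1 : p.val.2 = q.val.1
          · have h2 : p.val.1 ≠ q.val.1 := ne_of_lt (h1 ▸ p.prop)
            have h4 : p.val.1 ≠ q.val.2 := ne_of_lt (lt_trans (h1 ▸ p.prop) q.prop)
            simp [h1, h2, h4, ne_of_lt q.prop]
          · by_cases h2 : p.val.1 = q.val.1
            · have h3 : p.val.2 ≠ q.val.2 := by
                intro h
                exact hpq (Subtype.ext (Prod.ext h2 h))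
              simp [h1, h2, h3, ne_of_lt q.prop]
            · simp [h1, h2]
      rw [Finset.sum_congr rfl (fun p _ => heach p)] at hsum
      rw [Finset.sum_ite_eq' Finset.univ q (fun _ => -c q)] at hsum
      simpa using hsum
    -- now all coefficients vanish
    intro q
    by_cases hq0 : q.val.1 = 0
    · have hq2 : q.val.2 ≠ 0 := by
        intro h
        have h2 := q.prop
        rw [h, hq0] at h2
        exact absurd h2 (lt_irrefl _)
      obtain ⟨a', ha'⟩ := Fin.eq_succ_of_ne_zero hq2
      have hsum := hk a' a'
      have heach : ∀ p : {p : Fin (n + 1) × Fin (n + 1) // p.1 < p.2},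
          c p * (b.repr (x p.1.2 - x p.1.1) a') * (b.repr (x p.1.2 - x p.1.1) a')
            = if p = q then c q else 0 := by
        intro p
        rw [hr, ← ha']
        by_cases hp1 : p.val.1 = 0
        · have hp1q : p.val.1 ≠ q.val.2 := by rw [hp1]; exact Ne.symm hq2
          by_cases h2 : p.val.2 = q.val.2
          · have hpq : p = q := Subtype.ext (Prod.ext (hp1.trans hq0.symm) h2)
            simp [h2, hp1q, hpq, ne_of_lt q.prop]
          · have hpq : p ≠ q := fun h => h2 (by rw [h])
            simp [h2, hp1q, hpq]
        · have hpq : p ≠ q := fun h => hp1 (by rw [h, hq0])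
          simp [hoff p hp1, hpq]
      rw [Finset.sum_congr rfl (fun p _ => heach p)] at hsum
      rw [Finset.sum_ite_eq' Finset.univ q (fun _ => c q)] at hsum
      simpa using hsum
    · exact hoff q hq0
  refine ⟨hli, ?_⟩
  -- the span
  have hle : Submodule.span ℝ (Set.range T) ≤ symmetricMatrices n := by
    rw [Submodule.span_le]
    rintro _ ⟨p, rfl⟩
    show (T p).IsSymm
    rw [hT p]
    ext i j
    simp [Matrix.transpose_apply, vecMulVec_apply, mul_comm]
  refine le_antisymm hle ?_
  -- spanning: every symmetric matrix is in the span
  have htr : ∀ k l : Fin n, (vecMulVec (v k) (v l))ᵀ = vecMulVec (v l) (v k) := by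
    intro k l; ext i j; simp [Matrix.transpose_apply, vecMulVec_apply, mul_comm]
  have hmem : ∀ k l : Fin n,
      vecMulVec (v k) (v l) + vecMulVec (v l) (v k) ∈ Submodule.span ℝ (Set.range T) := by
    have hlt : ∀ k l : Fin n, k < l →
        vecMulVec (v k) (v l) + vecMulVec (v l) (v k) ∈ Submodule.span ℝ (Set.range T) := by
      intro k l hkl
      have hq0k : ((0 : Fin (n+1)), k.succ).1 < ((0 : Fin (n+1)), k.succ).2 := k.succ_pos
      have hq0l : ((0 : Fin (n+1)), l.succ).1 < ((0 : Fin (n+1)), l.succ).2 := l.succ_pos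
      have hqkl : ((k.succ : Fin (n+1)), l.succ).1 < ((k.succ : Fin (n+1)), l.succ).2 :=
        Fin.succ_lt_succ_iff.mpr hkl
      have hdecomp : vecMulVec (v k) (v l) + vecMulVec (v l) (v k)
          = T ⟨(0, k.succ), hq0k⟩ + T ⟨(0, l.succ), hq0l⟩ - T ⟨(k.succ, l.succ), hqkl⟩ := by
        rw [hT, hT, hT]
        simp only [hx0, hxs]
        ext i j
        simp [vecMulVec_apply, Matrix.sub_apply, Matrix.add_apply, Pi.sub_apply]
        ring
      rw [hdecomp]
      exact sub_mem
        (add_mem (Submodule.subset_span ⟨_, rfl⟩) (Submodule.subset_span ⟨_, rfl⟩))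
        (Submodule.subset_span ⟨_, rfl⟩)
    intro k l
    rcases lt_trichotomy k l with h | h | h
    · exact hlt k l h
    · subst h
      have hq0k : ((0 : Fin (n+1)), k.succ).1 < ((0 : Fin (n+1)), k.succ).2 := k.succ_pos
      have hdecomp : vecMulVec (v k) (v k) + vecMulVec (v k) (v k)
          = (2 : ℝ) • T ⟨(0, k.succ), hq0k⟩ := by
        rw [hT]
        simp only [hx0, hxs]
        ext i j
        simp [vecMulVec_apply, Matrix.smul_apply, Pi.sub_apply]
        ring
      rw [hdecomp]
      exact Submodule.smul_mem _ _ (Submodule.subset_span ⟨_, rfl⟩)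
    · simpa [add_comm] using hlt l k h
  intro A hA
  have hA' : Aᵀ = A := hA
  -- expansion of a vector in the basis
  have hrepr : ∀ (u : Fin n → ℝ) (j : Fin n), u j = ∑ l, b.repr u l * v l j := by
    intro u j
    conv_lhs => rw [← b.sum_repr u]
    rw [Finset.sum_apply]
    congr 1; funext l
    rw [hb l]
    simp [Pi.smul_apply]
  set C : Fin n → Fin n → ℝ := fun k l => b.repr (fun i => b.repr (A i) l) k with hC
  have hAexp : A = ∑ l, ∑ k, C k l • vecMulVec (v k) (v l) := by
    ext i j
    rw [hrepr (A i) j]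
    have h1 : ∀ l : Fin n, b.repr (A i) l = ∑ k, C k l * v k i := by
      intro l
      exact hrepr (fun i' => b.repr (A i') l) i
    calc ∑ l, b.repr (A i) l * v l j = ∑ l, (∑ k, C k l * v k i) * v l j := by
          congr 1; funext l; rw [h1 l]
      _ = ∑ l, ∑ k, C k l * v k i * v l j := by
          congr 1; funext l; rw [Finset.sum_mul]
      _ = (∑ l, ∑ k, C k l • vecMulVec (v k) (v l)) i j := by
          rw [Matrix.sum_apply]
          congr 1; funext l
          rw [Matrix.sum_apply]
          congr 1; funext k
          simp [vecMulVec_apply, Matrix.smul_apply]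
          ring
  have hATexp : A = ∑ l, ∑ k, C k l • vecMulVec (v l) (v k) := by
    conv_lhs => rw [← hA', hAexp]
    rw [Matrix.transpose_sum]
    congr 1; funext l
    rw [Matrix.transpose_sum]
    congr 1; funext k
    rw [Matrix.transpose_smul, htr]
  have hfinal : A = ∑ l, ∑ k, (C k l / 2) • (vecMulVec (v k) (v l) + vecMulVec (v l) (v k)) := by
    have h2 : (2 : ℝ) • A = ∑ l, ∑ k, C k l • (vecMulVec (v k) (v l) + vecMulVec (v l) (v k)) := by
      calc (2 : ℝ) • A = A + A := by rw [two_smul]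
        _ = (∑ l, ∑ k, C k l • vecMulVec (v k) (v l))
            + ∑ l, ∑ k, C k l • vecMulVec (v l) (v k) := by rw [← hAexp, ← hATexp]
        _ = ∑ l, ∑ k, C k l • (vecMulVec (v k) (v l) + vecMulVec (v l) (v k)) := by
            rw [← Finset.sum_add_distrib]
            congr 1; funext l
            rw [← Finset.sum_add_distrib]
            congr 1; funext k
            rw [smul_add]
    have h3 : A = (2⁻¹ : ℝ) • ((2 : ℝ) • A) := by
      rw [smul_smul]; norm_num
    rw [h3, h2, Finset.smul_sum]
    congr 1; funext l
    rw [Finset.smul_sum]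
    congr 1; funext k
    rw [smul_smul]
    congr 1
    ring
  rw [hfinal]
  exact Submodule.sum_mem _ fun l _ => Submodule.sum_mem _ fun k _ =>
    Submodule.smul_mem _ _ (hmem k l)
end

section
/- For all natural numbers n and k ≥ 1, the variant Chu-Vandermonde identity holds: ∑_{ℓ=0}^{n} C(n+1, ℓ+1) · C(k-1, ℓ) · C(ℓ+1, 2) = (n(n+1)/2) · C(n+k-2, n). -/
open Finset in
lemma vdm_aux (t p : ℕ) :
    ∑ i ∈ Finset.range (t + 1), t.choose i * (p + 1).choose (i + 1)
      = (t + 1 + p).choose (t + 1) := by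
  have h : t + 1 + p = t + (p + 1) := by ring
  conv_rhs => rw [h, Nat.add_choose_eq, Finset.Nat.sum_antidiagonal_eq_sum_range_succ_mk,
    Finset.sum_range_succ]
  simp only [Nat.choose_succ_self, Nat.zero_mul, add_zero]
  conv_lhs => rw [← Finset.sum_range_reflect]
  refine Finset.sum_congr rfl fun i hi => ?_
  rw [Finset.mem_range] at hi
  have hit : i ≤ t := Nat.lt_succ_iff.mp hi
  simp only [Nat.add_sub_cancel]
  have h1 : t - i + 1 = t + 1 - i := by omega
  rw [Nat.choose_symm hit, h1]

/-- Variant Chu-Vandermonde identity: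
∑_{ℓ=0}^{n} C(n+1, ℓ+1) · C(k-1, ℓ) · C(ℓ+1, 2) = (n(n+1)/2) · C(n+k-2, n). -/
theorem chu_vandermonde_variant (n k : ℕ) (hk : 1 ≤ k) :
    ∑ ℓ ∈ Finset.range (n + 1),
        (n + 1).choose (ℓ + 1) * (k - 1).choose ℓ * (ℓ + 1).choose 2
      = n * (n + 1) / 2 * (n + k - 2).choose n := by
  obtain ⟨m, rfl⟩ : ∃ m, k = m + 1 := ⟨k - 1, by omega⟩
  match m with
  | 0 =>
    have hL : ∑ ℓ ∈ Finset.range (n + 1),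
        (n + 1).choose (ℓ + 1) * (0 + 1 - 1).choose ℓ * (ℓ + 1).choose 2 = 0 := by
      refine Finset.sum_eq_zero fun ℓ _ => ?_
      match ℓ with
      | 0 => simp
      | j + 1 => simp [Nat.choose_eq_zero_of_lt (by omega : (0:ℕ) < j + 1)]
    rw [hL]
    match n with
    | 0 => simp
    | t + 1 =>
      have : t + 1 + (0 + 1) - 2 = t := by omega
      rw [this, Nat.choose_eq_zero_of_lt (by omega)]
      ring
  | p + 1 =>
    match n with
    | 0 => simp
    | t + 1 =>
      have hsub : t + 1 + (p + 1 + 1) - 2 = t + 1 + p := by omega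
      rw [hsub, Finset.sum_range_succ']
      have hf0 : (t + 1 + 1).choose (0 + 1) * (p + 1 + 1 - 1).choose 0 * (0 + 1).choose 2
          = 0 := by simp
      rw [hf0, add_zero]
      have hterm : ∀ i ∈ Finset.range (t + 1),
          (t + 1 + 1).choose (i + 1 + 1) * (p + 1 + 1 - 1).choose (i + 1)
              * (i + 1 + 1).choose 2
            = (t + 1 + 1).choose 2 * (t.choose i * (p + 1).choose (i + 1)) := by
        intro i hi
        rw [Finset.mem_range] at hi
        have hkn : i + 1 + 1 ≤ t + 1 + 1 := by omega
        have hsk : 2 ≤ i + 1 + 1 := by omega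
        have := Nat.choose_mul (n := t + 1 + 1) hsk
        have e1 : t + 1 + 1 - 2 = t := by omega
        have e2 : i + 1 + 1 - 2 = i := by omega
        rw [e1, e2] at this
        have e3 : p + 1 + 1 - 1 = p + 1 := by omega
        rw [e3]
        calc (t + 1 + 1).choose (i + 1 + 1) * (p + 1).choose (i + 1)
              * (i + 1 + 1).choose 2
            = (t + 1 + 1).choose (i + 1 + 1) * (i + 1 + 1).choose 2
                * (p + 1).choose (i + 1) := by ring
          _ = (t + 1 + 1).choose 2 * t.choose i * (p + 1).choose (i + 1) := by rw [this]
          _ = _ := by ring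
      rw [Finset.sum_congr rfl hterm, ← Finset.mul_sum, vdm_aux]
      congr 1
      rw [Nat.choose_two_right]
      have : t + 1 + 1 - 1 = t + 1 := by omega
      rw [this]
      ring_nf
end

section
/- For all natural numbers n ≥ 1 and k ≥ 1: ∑_{ℓ=0}^{n-1} C(n+1, ℓ+1) · ((n-ℓ)(n+ℓ+1)/2) · C(k-1, ℓ) + (n(n+1)/2) · C(n+k-2, n) = (n(n+1)/2) · C(n+k, n). -/
open Finset

lemma vdm_range (M K r : ℕ) :
    (M + K).choose r = ∑ j ∈ range (r + 1), M.choose j * K.choose (r - j) := by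
  rw [Nat.add_choose_eq, Finset.Nat.sum_antidiagonal_eq_sum_range_succ_mk]

lemma lemA (n K : ℕ) :
    (∑ ℓ ∈ range n, (n + 1).choose (ℓ + 1) * K.choose ℓ) + K.choose n
      = (n + K + 1).choose n := by
  have h := vdm_range (n + 1) K n
  rw [← Finset.sum_range_reflect] at h
  have h2 : ∀ j ∈ range (n + 1),
      (n+1).choose (n + 1 - 1 - j) * K.choose (n - (n + 1 - 1 - j))
        = (n+1).choose (j+1) * K.choose j := by
    intro j hj
    rw [mem_range] at hj
    have hj' : j ≤ n := by omega
    have e1 : n + 1 - 1 - j = n - j := by omega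
    have e2 : n - (n - j) = j := by omega
    rw [e1, e2]
    congr 1
    have := Nat.choose_symm (show j + 1 ≤ n + 1 by omega)
    rwa [show n + 1 - (j + 1) = n - j by omega] at this
  rw [Finset.sum_congr rfl h2, Finset.sum_range_succ] at h
  simp only [Nat.choose_self, one_mul] at h
  have : n + 1 + K = n + K + 1 := by ring
  rw [this] at h
  omega

lemma lemB (m K : ℕ) :
    (∑ j ∈ range m, m.choose j * K.choose (j + 1)) + K.choose (m + 1)
      = (m + K).choose (m + 1) := by
  have h := vdm_range m K (m + 1)
  rw [← Finset.sum_range_reflect] at h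
  have h2 : ∀ i ∈ range (m + 1 + 1),
      m.choose (m + 1 + 1 - 1 - i) * K.choose (m + 1 - (m + 1 + 1 - 1 - i))
        = m.choose (m + 1 - i) * K.choose i := by
    intro i hi
    rw [mem_range] at hi
    have e1 : m + 1 + 1 - 1 - i = m + 1 - i := by omega
    have e2 : m + 1 - (m + 1 - i) = i := by omega
    rw [e1, e2]
  rw [Finset.sum_congr rfl h2, Finset.sum_range_succ'] at h
  simp only [Nat.sub_zero, Nat.choose_succ_self, zero_mul, add_zero] at h
  have h3 : ∀ i ∈ range (m + 1),
      m.choose (m + 1 - (i + 1)) * K.choose (i + 1)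
        = m.choose i * K.choose (i + 1) := by
    intro i hi
    rw [mem_range] at hi
    congr 1
    have := Nat.choose_symm (show i ≤ m by omega)
    rwa [show m + 1 - (i + 1) = m - i by omega]
  rw [Finset.sum_congr rfl h3, Finset.sum_range_succ] at h
  simp only [Nat.choose_self, one_mul] at h
  omega

lemma Tsub (ℓ n : ℕ) (h : ℓ ≤ n) :
    (n - ℓ) * (n + ℓ + 1) / 2 = n * (n + 1) / 2 - ℓ * (ℓ + 1) / 2 := by
  obtain ⟨d, rfl⟩ : ∃ d, n = ℓ + d := ⟨n - ℓ, by omega⟩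
  obtain ⟨a, ha⟩ := Nat.even_mul_succ_self ℓ
  obtain ⟨b, hb⟩ := Nat.even_mul_succ_self (ℓ + d)
  have h1 : ℓ + d - ℓ = d := by omega
  have key : d * (ℓ + d + ℓ + 1) + ℓ * (ℓ + 1) = (ℓ + d) * (ℓ + d + 1) := by ring
  rw [h1]
  rw [ha, hb] at key ⊢
  generalize hX : d * (ℓ + d + ℓ + 1) = X at key ⊢
  omega

lemma auxsub (a T t c : ℕ) : a * (T - t) * c = T * (a * c) - a * t * c := by
  rw [Nat.mul_sub, Nat.sub_mul]
  congr 1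
  ring

lemma lemC (m K : ℕ) :
    (∑ ℓ ∈ range (m + 1), (m + 1 + 1).choose (ℓ + 1) * (ℓ * (ℓ + 1) / 2) * K.choose ℓ)
      + (m + 1) * (m + 1 + 1) / 2 * K.choose (m + 1)
      = (m + 1) * (m + 1 + 1) / 2 * (m + K).choose (m + 1) := by
  rw [Finset.sum_range_succ']
  simp only [Nat.zero_mul, Nat.zero_add, Nat.zero_div, Nat.mul_zero, Nat.mul_one, zero_mul,
    mul_zero, add_zero, Nat.zero_div]
  have h1 : ∀ j ∈ range m,
      (m + 1 + 1).choose (j + 1 + 1) * ((j + 1) * (j + 1 + 1) / 2) * K.choose (j + 1)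
        = (m + 1) * (m + 1 + 1) / 2 * (m.choose j * K.choose (j + 1)) := by
    intro j hj
    rw [mem_range] at hj
    have ht : (j + 1) * (j + 1 + 1) / 2 = (j + 2).choose 2 := by
      rw [Nat.choose_two_right, show j + 2 - 1 = j + 1 by omega]
      ring_nf
    have hC2 : (m + 1) * (m + 1 + 1) / 2 = (m + 2).choose 2 := by
      rw [Nat.choose_two_right, show m + 2 - 1 = m + 1 by omega]
      ring_nf
    rw [ht, hC2, show j + 1 + 1 = j + 2 from rfl, show m + 1 + 1 = m + 2 from rfl]
    have hcm := Nat.choose_mul (n := m + 2) (show 2 ≤ j + 2 by omega)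
    rw [show m + 2 - 2 = m by omega, show j + 2 - 2 = j by omega] at hcm
    calc (m + 2).choose (j + 2) * ((j + 2).choose 2) * K.choose (j + 1)
        = (m + 2).choose 2 * m.choose j * K.choose (j + 1) := by rw [hcm]
      _ = (m + 2).choose 2 * (m.choose j * K.choose (j + 1)) := by ring
  rw [Finset.sum_congr rfl h1, ← Finset.mul_sum, ← Nat.mul_add, lemB]

/-- The degree-of-freedom count: interface moments plus bubble degrees of freedom
equal the dimension of symmetric-matrix-valued polynomials of degree at most k. -/
theorem dof_count (n k : ℕ) (hn : 1 ≤ n) (hk : 1 ≤ k) :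
    (∑ ℓ ∈ Finset.range n,
        (n + 1).choose (ℓ + 1) * ((n - ℓ) * (n + ℓ + 1) / 2) * (k - 1).choose ℓ)
      + n * (n + 1) / 2 * (n + k - 2).choose n
      = n * (n + 1) / 2 * (n + k).choose n := by
  obtain ⟨K, rfl⟩ : ∃ K, k = K + 1 := ⟨k - 1, by omega⟩
  obtain ⟨m, rfl⟩ : ∃ m, n = m + 1 := ⟨n - 1, by omega⟩
  rw [show K + 1 - 1 = K from rfl, show m + 1 + (K + 1) - 2 = m + K by omega,
    show m + 1 + (K + 1) = m + K + 2 by omega]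
  have hsum : ∀ ℓ ∈ range (m + 1),
      (m + 1 + 1).choose (ℓ + 1) * ((m + 1 - ℓ) * (m + 1 + ℓ + 1) / 2) * K.choose ℓ
        = (m + 1) * (m + 1 + 1) / 2 * ((m + 1 + 1).choose (ℓ + 1) * K.choose ℓ)
          - (m + 1 + 1).choose (ℓ + 1) * (ℓ * (ℓ + 1) / 2) * K.choose ℓ := by
    intro ℓ hℓ
    rw [mem_range] at hℓ
    rw [Tsub ℓ (m + 1) (by omega)]
    exact auxsub _ _ _ _
  have hle : ∀ ℓ ∈ range (m + 1),
      (m + 1 + 1).choose (ℓ + 1) * (ℓ * (ℓ + 1) / 2) * K.choose ℓ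
        ≤ (m + 1) * (m + 1 + 1) / 2 * ((m + 1 + 1).choose (ℓ + 1) * K.choose ℓ) := by
    intro ℓ hℓ
    rw [mem_range] at hℓ
    calc (m + 1 + 1).choose (ℓ + 1) * (ℓ * (ℓ + 1) / 2) * K.choose ℓ
        ≤ (m + 1 + 1).choose (ℓ + 1) * ((m + 1) * (m + 1 + 1) / 2) * K.choose ℓ := by
          have : ℓ * (ℓ + 1) / 2 ≤ (m + 1) * (m + 1 + 1) / 2 :=
            Nat.div_le_div_right (Nat.mul_le_mul (by omega) (by omega))
          gcongr
      _ = (m + 1) * (m + 1 + 1) / 2 * ((m + 1 + 1).choose (ℓ + 1) * K.choose ℓ) := by ring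
  rw [Finset.sum_congr rfl hsum, Finset.sum_tsub_distrib _ hle, ← Finset.mul_sum]
  have hA := lemA (m + 1) K
  rw [show m + 1 + K + 1 = m + K + 2 by omega] at hA
  have hA' : (m + 1) * (m + 1 + 1) / 2
        * (∑ ℓ ∈ range (m + 1), (m + 1 + 1).choose (ℓ + 1) * K.choose ℓ)
      + (m + 1) * (m + 1 + 1) / 2 * K.choose (m + 1)
      = (m + 1) * (m + 1 + 1) / 2 * (m + K + 2).choose (m + 1) := by
    rw [← Nat.mul_add, hA]
  have hC := lemC m K
  have hmono : (m + 1) * (m + 1 + 1) / 2 * (m + K).choose (m + 1)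
      ≤ (m + 1) * (m + 1 + 1) / 2 * (m + K + 2).choose (m + 1) :=
    Nat.mul_le_mul_left _ (Nat.choose_le_choose _ (by omega))
  generalize hx : (m + 1) * (m + 1 + 1) / 2
      * (∑ ℓ ∈ range (m + 1), (m + 1 + 1).choose (ℓ + 1) * K.choose ℓ) = x at hA' ⊢
  generalize hs : (∑ ℓ ∈ range (m + 1),
      (m + 1 + 1).choose (ℓ + 1) * (ℓ * (ℓ + 1) / 2) * K.choose ℓ) = s at hC ⊢
  generalize hy : (m + 1) * (m + 1 + 1) / 2 * K.choose (m + 1) = y at hA' hC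
  generalize hz : (m + 1) * (m + 1 + 1) / 2 * (m + K + 2).choose (m + 1) = z at hA' hmono ⊢
  generalize hw : (m + 1) * (m + 1 + 1) / 2 * (m + K).choose (m + 1) = w at hC hmono ⊢
  omega
end

section
/- Let x_0, ..., x_n be the vertices of a nondegenerate simplex K ⊂ R^n with barycentric coordinate functions λ_0, ..., λ_n. For every pair 0 ≤ i < j ≤ n, every polynomial q of degree at most k-2, and every face F of K (an (n-1)-dimensional subsimplex) with unit normal ν, the symmetric matrix field τ = λ_i λ_j q T_{i,j} (with T_{i,j} = t_{i,j} t_{i,j}^T, t_{i,j} = x_j - x_i) satisfies τν = 0 on F. -/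
open MvPolynomial Matrix

/-- A multidegree with sum ≤ 1 is zero or a single variable. -/
lemma deg_le_one_classify (n : ℕ) (d : Fin n →₀ ℕ)
    (hd : (d.sum fun _ e => e) ≤ 1) :
    d = 0 ∨ ∃ i, d = Finsupp.single i 1 := by
  rcases eq_or_ne d 0 with h | h
  · exact Or.inl h
  · obtain ⟨i, hi⟩ := Finsupp.ne_iff.mp h
    simp only [Finsupp.coe_zero, Pi.zero_apply] at hi
    right
    refine ⟨i, ?_⟩
    have hmem : i ∈ d.support := Finsupp.mem_support_iff.mpr hi
    have hle : d i ≤ d.sum fun _ e => e := by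
      have := Finset.single_le_sum (f := fun a => d a) (fun a _ => Nat.zero_le _) hmem
      simpa [Finsupp.sum] using this
    have hdi : d i = 1 := le_antisymm (hle.trans hd) (Nat.one_le_iff_ne_zero.mpr hi)
    ext a
    rcases eq_or_ne a i with rfl | ha
    · simp [hdi]
    · have : d a = 0 := by
        by_contra hda
        have hamem : a ∈ d.support := Finsupp.mem_support_iff.mpr hda
        have h2 : d a + d i ≤ d.sum fun _ e => e := by
          have := Finset.add_sum_erase d.support (fun a => d a) hamem
          have hie : i ∈ d.support.erase a := Finset.mem_erase.mpr ⟨(Ne.symm ha), hmem⟩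
          have := Finset.single_le_sum (f := fun a => d a) (fun a _ => Nat.zero_le _) hie
          have h3 : d a + d i ≤ ∑ b ∈ d.support, d b := by
            calc d a + d i ≤ d a + ∑ b ∈ d.support.erase a, d b := by
                  exact Nat.add_le_add_left this _
            _ = ∑ b ∈ d.support, d b := Finset.add_sum_erase d.support (fun a => d a) hamem
          simpa [Finsupp.sum] using h3
        omega
      simp [this, Finsupp.single_apply, Ne.symm ha]

/-- Evaluation of a degree ≤ 1 polynomial is affine on convex combinations. -/
lemma eval_affine_comb (n : ℕ) (p : MvPolynomial (Fin n) ℝ)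
    (hp : p.totalDegree ≤ 1) {ι : Type} (s : Finset ι) (w : ι → ℝ)
    (z : ι → Fin n → ℝ) (hw : ∑ l ∈ s, w l = 1) :
    eval (∑ l ∈ s, w l • z l) p = ∑ l ∈ s, w l * eval (z l) p := by
  rw [p.as_sum]
  simp only [map_sum, Finset.mul_sum]
  rw [Finset.sum_comm]
  refine Finset.sum_congr rfl fun d hd => ?_
  have hdeg : (d.sum fun _ e => e) ≤ 1 := (le_totalDegree hd).trans hp
  rcases deg_le_one_classify n d hdeg with rfl | ⟨i, rfl⟩
  · simp [hw, ← Finset.sum_mul]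
  · simp only [eval_monomial, Finsupp.prod_single_index, pow_zero, pow_one,
      Finset.sum_apply, Pi.smul_apply, smul_eq_mul, Finset.mul_sum]
    exact Finset.sum_congr rfl fun l _ => by ring
  
/-- A degree ≤ 1 polynomial vanishing on a set vanishes on its convex hull. -/
lemma eval_zero_on_convexHull (n : ℕ) (p : MvPolynomial (Fin n) ℝ)
    (hp : p.totalDegree ≤ 1) (s : Set (Fin n → ℝ))
    (hs : ∀ z ∈ s, eval z p = 0) {y : Fin n → ℝ}
    (hy : y ∈ convexHull ℝ s) : eval y p = 0 := by
  rw [convexHull_eq] at hy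
  obtain ⟨ι, t, w, z, hw0, hw1, hzs, hcm⟩ := hy
  rw [Finset.centerMass_eq_of_sum_1 _ _ hw1] at hcm
  rw [← hcm, eval_affine_comb n p hp t w z hw1]
  exact Finset.sum_eq_zero fun l hl => by rw [hs (z l) (hzs l hl), mul_zero]

/-- The bubble field τ = λ_i λ_j q T_{i,j} satisfies τν = 0 on every face of
the simplex K. -/
theorem bubble_normal_trace_vanishes (n k : ℕ)
    (x : Fin (n + 1) → (Fin n → ℝ)) (hx : AffineIndependent ℝ x)
    (lam : Fin (n + 1) → MvPolynomial (Fin n) ℝ)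
    (hlamdeg : ∀ m, (lam m).totalDegree ≤ 1)
    (hlamval : ∀ m l, eval (x l) (lam m) = if m = l then 1 else 0)
    (hlamsum : ∑ m, lam m = 1)
    (i j : Fin (n + 1)) (hij : i < j)
    (q : MvPolynomial (Fin n) ℝ) (hq : q.totalDegree ≤ k - 2)
    (m : Fin (n + 1)) (F : Set (Fin n → ℝ))
    (hF : F = convexHull ℝ (x '' {l | l ≠ m}))
    (ν : Fin n → ℝ) (hν : ν ≠ 0)
    (hνnormal : ∀ l l' : Fin (n + 1), l ≠ m → l' ≠ m →
      dotProduct ν (x l' - x l) = 0) :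
    ∀ y ∈ F,
      Matrix.mulVec
        ((eval y (lam i) * eval y (lam j) * eval y q) •
          Matrix.vecMulVec (x j - x i) (x j - x i)) ν = 0 := by
  intro y hy
  set t := x j - x i with ht
  have key : ∀ l, Matrix.mulVec
      ((eval y (lam i) * eval y (lam j) * eval y q) • Matrix.vecMulVec t t) ν l
      = (eval y (lam i) * eval y (lam j) * eval y q) * (t l * (ν ⬝ᵥ t)) := by
    intro l
    simp only [Matrix.mulVec, dotProduct, Matrix.smul_apply, Matrix.vecMulVec_apply,
      smul_eq_mul, Finset.mul_sum]
    congr 1; ext s; ring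
  by_cases him : i = m
  · -- λ_m vanishes on F
    have hzero : eval y (lam i) = 0 := by
      subst hF him
      refine eval_zero_on_convexHull n _ (hlamdeg i) _ ?_ hy
      rintro z ⟨l, hl, rfl⟩
      have hli : ¬ i = l := fun h => hl h.symm
      simp [hlamval, hli]
    funext l
    rw [key l, hzero]
    simp
  · by_cases hjm : j = m
    · have hzero : eval y (lam j) = 0 := by
        subst hF hjm
        refine eval_zero_on_convexHull n _ (hlamdeg j) _ ?_ hy
        rintro z ⟨l, hl, rfl⟩
        have hlj : ¬ j = l := fun h => hl h.symm
        simp [hlamval, hlj]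
      funext l
      rw [key l, hzero]
      simp
    · have hdot : ν ⬝ᵥ t = 0 := hνnormal i j him hjm
      funext l
      rw [key l, hdot]
      simp
end
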